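/- Let F : ℝ^n ⇉ ℝ^m be a set-valued mapping with closed graph and ȳ ∈ J(F). If there exist constants R > 0, ℓ > 0 and a neighborhood V of ȳ such that F⁻¹(y') ∩ (ℝ^n \ 𝔹_R) ⊆ F⁻¹(y) + ℓ‖y' − y‖𝔹 for all y, y' ∈ V, then ker D*F(∞, ȳ) = {0}, i.e., the only v ∈ ℝ^m with 0 ∈ D*F(∞, ȳ)(v) is v = 0. -/

import Mathlib

open Filter Topology Set Metric Pointwise
open scoped RealInnerProductSpace ENNReal

noncomputable section

variable {E F G : Type*}
  [NormedAddCommGroup E] [InnerProductSpace ℝ E]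
  [NormedAddCommGroup F] [InnerProductSpace ℝ F]
  [NormedAddCommGroup G] [InnerProductSpace ℝ G]

/-- The regular (Fréchet) normal cone to a subset of a product of inner product
spaces, at a point `p` (empty if `p ∉ Ω`). -/
def frechetNormalCone2 (Ω : Set (E × F)) (p : E × F) : Set (E × F) :=
  {ξ | p ∈ Ω ∧ ∀ ε > (0:ℝ), ∀ᶠ q in nhdsWithin p Ω,
      ⟪ξ.1, q.1 - p.1⟫ + ⟪ξ.2, q.2 - p.2⟫ ≤ ε * ‖q - p‖}

/-- The limiting (Mordukhovich) normal cone. -/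
def limitingNormalCone2 (Ω : Set (E × F)) (p : E × F) : Set (E × F) :=
  {ξ | ∃ pk : ℕ → E × F, ∃ ξk : ℕ → E × F,
    (∀ k, pk k ∈ Ω) ∧ Tendsto pk atTop (𝓝 p) ∧
    (∀ k, ξk k ∈ frechetNormalCone2 Ω (pk k)) ∧ Tendsto ξk atTop (𝓝 ξ)}

/-- The normal cone to `Ω ⊆ E × F` at `(∞, ȳ)`. -/
def normalConeAtInfty (Ω : Set (E × F)) (ybar : F) : Set (E × F) :=
  {ξ | ∃ pk : ℕ → E × F, ∃ ξk : ℕ → E × F,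
    (∀ k, pk k ∈ Ω) ∧ Tendsto (fun k => ‖(pk k).1‖) atTop atTop ∧
    Tendsto (fun k => (pk k).2) atTop (𝓝 ybar) ∧
    (∀ k, ξk k ∈ frechetNormalCone2 Ω (pk k)) ∧ Tendsto ξk atTop (𝓝 ξ)}

/-- `Ω ⊆ E × F` is locally closed at `(∞, ȳ)`. -/
def LocallyClosedAtInfty (Ω : Set (E × F)) (ybar : F) : Prop :=
  ∃ R > (0:ℝ), ∃ V ∈ 𝓝 ybar, IsClosed V ∧
    IsClosed (Ω ∩ {p : E × F | R ≤ ‖p.1‖ ∧ p.2 ∈ V})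

/-- Graph of a set-valued mapping. -/
def svGraph (S : E → Set F) : Set (E × F) := {p | p.2 ∈ S p.1}

/-- Jelonek set of a set-valued mapping. -/
def jelonek (S : E → Set F) : Set F :=
  {y | ∃ xk : ℕ → E, ∃ yk : ℕ → F,
    Tendsto (fun k => ‖xk k‖) atTop atTop ∧ (∀ k, yk k ∈ S (xk k)) ∧
    Tendsto yk atTop (𝓝 y)}

/-- Coderivative of a set-valued mapping at a point of its graph. -/
def coderiv (S : E → Set F) (x : E) (y : F) (v : F) : Set E :=
  {u | (u, -v) ∈ limitingNormalCone2 (svGraph S) (x, y)}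

/-- Coderivative of a set-valued mapping at `(∞, ȳ)`. -/
def coderivAtInfty (S : E → Set F) (ybar : F) (v : F) : Set E :=
  {u | (u, -v) ∈ normalConeAtInfty (svGraph S) ybar}

/-- Regular normal cone, one-space version. -/
def frechetNormalCone1 (Ω : Set E) (x : E) : Set E :=
  {ξ | x ∈ Ω ∧ ∀ ε > (0:ℝ), ∀ᶠ x' in nhdsWithin x Ω, ⟪ξ, x' - x⟫ ≤ ε * ‖x' - x‖}

/-- Normal cone at infinity to an unbounded subset of `E`. -/
def normalConeAtInfty1 (Ω : Set E) : Set E :=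
  {ξ | ∃ xk : ℕ → E, ∃ ξk : ℕ → E, (∀ k, xk k ∈ Ω) ∧
    Tendsto (fun k => ‖xk k‖) atTop atTop ∧
    (∀ k, ξk k ∈ frechetNormalCone1 Ω (xk k)) ∧ Tendsto ξk atTop (𝓝 ξ)}

/-- Epigraph of an extended-real-valued function. -/
def epiSet (f : E → EReal) : Set (E × ℝ) := {p | f p.1 ≤ (p.2 : EReal)}

/-- Graph of an extended-real-valued function, as a subset of `E × ℝ`. -/
def gphFun (f : E → EReal) : Set (E × ℝ) := {p | f p.1 = (p.2 : EReal)}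

/-- Jelonek set of a function. -/
def jelonekFun (f : E → EReal) : Set ℝ :=
  {y | ∃ xk : ℕ → E, Tendsto (fun k => ‖xk k‖) atTop atTop ∧
    Tendsto (fun k => f (xk k)) atTop (𝓝 (y : EReal))}

/-- Limiting subdifferential of `f` at `x` (empty outside `dom f`). -/
def limSubdiff (f : E → EReal) (x : E) : Set E :=
  {u | ∃ r : ℝ, f x = (r : EReal) ∧
    (u, (-1 : ℝ)) ∈ limitingNormalCone2 (epiSet f) (x, r)}

/-- Limiting subdifferential of `f` at `(∞, ȳ)`. -/
def limSubdiffAtInfty (f : E → EReal) (ybar : ℝ) : Set E :=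
  {u | (u, (-1 : ℝ)) ∈ normalConeAtInfty (epiSet f) ybar}

/-- Singular subdifferential of `f` at `(∞, ȳ)`. -/
def singSubdiffAtInfty (f : E → EReal) (ybar : ℝ) : Set E :=
  {u | (u, (0 : ℝ)) ∈ normalConeAtInfty (epiSet f) ybar}

/-- Inverse of a set-valued mapping. -/
def svInv (S : E → Set F) (y : F) : Set E := {x | y ∈ S x}

/-- Preimage `F⁻¹(V) = {x : F(x) ∩ V ≠ ∅}`. -/
def svPreimage (S : E → Set F) (V : Set F) : Set E := {x | (S x ∩ V).Nonempty}

/-- Distance function of a set-valued mapping, with value `+∞` on empty values. -/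
def dSV (S : E → Set F) (p : E × F) : EReal :=
  ((EMetric.infEdist p.2 (S p.1) : ℝ≥0∞) : EReal)

/-- Regular normal cone on `(E × F) × ℝ`. -/
def frechetNormalCone3 (Ω : Set ((E × F) × ℝ)) (p : (E × F) × ℝ) : Set ((E × F) × ℝ) :=
  {ξ | p ∈ Ω ∧ ∀ ε > (0:ℝ), ∀ᶠ q in nhdsWithin p Ω,
      ⟪ξ.1.1, q.1.1 - p.1.1⟫ + ⟪ξ.1.2, q.1.2 - p.1.2⟫ + ξ.2 * (q.2 - p.2)
        ≤ ε * ‖q - p‖}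

/-- Limiting normal cone on `(E × F) × ℝ`. -/
def limitingNormalCone3 (Ω : Set ((E × F) × ℝ)) (p : (E × F) × ℝ) : Set ((E × F) × ℝ) :=
  {ξ | ∃ pk ξk : ℕ → (E × F) × ℝ, (∀ k, pk k ∈ Ω) ∧ Tendsto pk atTop (𝓝 p) ∧
    (∀ k, ξk k ∈ frechetNormalCone3 Ω (pk k)) ∧ Tendsto ξk atTop (𝓝 ξ)}

/-- Limiting subdifferential of the distance function `d_F`. -/
def limSubdiffD (S : E → Set F) (p : E × F) : Set (E × F) :=
  {w | ∃ r : ℝ, dSV S p = (r : EReal) ∧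
    (w, (-1 : ℝ)) ∈ limitingNormalCone3 {q : (E × F) × ℝ | dSV S q.1 ≤ (q.2 : EReal)} (p, r)}

/-- The set `J⁺(F₁ + F₂, y)`. -/
def jplus (S₁ S₂ : E → Set F) (y : F) : Set (F × F) :=
  {q | ∃ xk : ℕ → E, ∃ y1k y2k : ℕ → F,
    Tendsto (fun k => ‖xk k‖) atTop atTop ∧
    (∀ k, y1k k ∈ S₁ (xk k)) ∧ (∀ k, y2k k ∈ S₂ (xk k)) ∧
    Tendsto y1k atTop (𝓝 q.1) ∧ Tendsto y2k atTop (𝓝 q.2) ∧ q.1 + q.2 = y}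

/-- The set `J°(F₂ ∘ F₁, y)`. -/
def jcirc (S₁ : E → Set G) (S₂ : G → Set F) (y : F) : Set G :=
  {z | ∃ xk : ℕ → E, ∃ zk : ℕ → G, ∃ yk : ℕ → F,
    Tendsto (fun k => ‖xk k‖) atTop atTop ∧ (∀ k, zk k ∈ S₁ (xk k)) ∧
    (∀ k, yk k ∈ S₂ (zk k)) ∧ Tendsto zk atTop (𝓝 z) ∧ Tendsto yk atTop (𝓝 y)}

/-- Composition `F₂ ∘ F₁` of set-valued mappings. -/
def svComp (S₂ : G → Set F) (S₁ : E → Set G) (x : E) : Set F :=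
  {y | ∃ z ∈ S₁ x, y ∈ S₂ z}

abbrev Eucl (n : ℕ) := EuclideanSpace ℝ (Fin n)

set_option maxHeartbeats 1000000 in
lemma key_bound {n m : ℕ} (S : Eucl n → Set (Eucl m)) (R ℓ : ℝ) (hℓ : 0 < ℓ)
    (V : Set (Eucl m))
    (hlip : ∀ y ∈ V, ∀ y' ∈ V, ∀ x ∈ svInv S y', R < ‖x‖ →
      x ∈ svInv S y + closedBall (0 : Eucl n) (ℓ * ‖y' - y‖))
    (x : Eucl n) (y : Eucl m) (hx : R < ‖x‖) (hyV : y ∈ V)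
    (s : ℝ) (hs : 0 < s) (hsub : ball y s ⊆ V)
    (u : Eucl n) (w : Eucl m)
    (hξ : (u, w) ∈ frechetNormalCone2 (svGraph S) (x, y)) :
    ‖w‖ ≤ ℓ * ‖u‖ := by
  rcases eq_or_ne w 0 with rfl | hw
  · simp; positivity
  have hwn : 0 < ‖w‖ := norm_pos_iff.mpr hw
  have hM : (0:ℝ) < max ℓ 1 := lt_of_lt_of_le one_pos (le_max_right _ _)
  refine le_of_forall_pos_le_add (fun ε hε => ?_)
  set ε' : ℝ := ε / max ℓ 1 with hε'def
  have hε' : 0 < ε' := div_pos hε hM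
  obtain ⟨hmem, hfre⟩ := hξ
  have hev := hfre ε' hε'
  obtain ⟨δ, hδ, hδprop⟩ := Metric.mem_nhdsWithin_iff.mp hev
  -- choose t
  set t : ℝ := min (δ / (2 * ‖w‖ * max ℓ 1)) (s / (2 * ‖w‖)) with htdef
  have ht : 0 < t := lt_min (by positivity) (by positivity)
  have ht1 : t * (‖w‖ * max ℓ 1) < δ := by
    have h1 : t ≤ δ / (2 * ‖w‖ * max ℓ 1) := min_le_left _ _
    have := mul_le_mul_of_nonneg_right h1 (by positivity : (0:ℝ) ≤ ‖w‖ * max ℓ 1)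
    calc t * (‖w‖ * max ℓ 1) ≤ δ / (2 * ‖w‖ * max ℓ 1) * (‖w‖ * max ℓ 1) := this
      _ = δ / 2 := by field_simp
      _ < δ := by linarith
  have ht2 : t * ‖w‖ < s := by
    have h1 : t ≤ s / (2 * ‖w‖) := min_le_right _ _
    have := mul_le_mul_of_nonneg_right h1 hwn.le
    calc t * ‖w‖ ≤ s / (2 * ‖w‖) * ‖w‖ := this
      _ = s / 2 := by field_simp
      _ < s := by linarith
  set y2 : Eucl m := y + t • w with hy2def
  have hy2dist : ‖y2 - y‖ = t * ‖w‖ := by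
    simp [hy2def, norm_smul, abs_of_pos ht]
  have hy2V : y2 ∈ V := by
    apply hsub
    rw [Metric.mem_ball, dist_eq_norm, hy2dist]
    exact ht2
  have hxinv : x ∈ svInv S y := hmem
  obtain ⟨a, ha, b, hb, hab⟩ := hlip y2 hy2V y hyV x hxinv hx
  have hbnorm : ‖b‖ ≤ ℓ * (t * ‖w‖) := by
    have := mem_closedBall_iff_norm.mp hb
    rw [sub_zero] at this
    have hyy2 : ‖y - y2‖ = t * ‖w‖ := by rw [← norm_neg, neg_sub, hy2dist]
    rw [hyy2] at this; exact this
  have hab' : a + b = x := hab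
  have haX : ‖a - x‖ ≤ ℓ * (t * ‖w‖) := by
    have h : a - x = -b := by rw [← hab']; abel
    rw [h, norm_neg]; exact hbnorm
  -- q = (a, y2) ∈ graph, close to (x,y)
  have hqΩ : (a, y2) ∈ svGraph S := ha
  have hdq : dist ((a, y2) : Eucl n × Eucl m) (x, y) ≤ t * (‖w‖ * max ℓ 1) := by
    rw [Prod.dist_eq]
    apply max_le
    · rw [dist_eq_norm]
      calc ‖a - x‖ ≤ ℓ * (t * ‖w‖) := haX
        _ ≤ t * (‖w‖ * max ℓ 1) := by
            nlinarith [mul_le_mul_of_nonneg_left (le_max_left ℓ 1)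
              (mul_nonneg ht.le hwn.le)]
    · rw [dist_eq_norm, hy2dist]
      nlinarith [mul_le_mul_of_nonneg_left (le_max_right ℓ 1)
        (mul_nonneg ht.le hwn.le)]
  have hineq := hδprop ⟨Metric.mem_ball.mpr (lt_of_le_of_lt hdq ht1), hqΩ⟩
  simp only [Set.mem_setOf_eq] at hineq
  have hterm2 : ⟪w, y2 - y⟫ = t * ‖w‖ ^ 2 := by
    have : y2 - y = t • w := by simp [hy2def]
    rw [this, real_inner_smul_right, real_inner_self_eq_norm_sq]
  have hterm1 : -(‖u‖ * (ℓ * (t * ‖w‖))) ≤ ⟪u, a - x⟫ := by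
    have h1 := abs_real_inner_le_norm u (a - x)
    have h2 : ‖u‖ * ‖a - x‖ ≤ ‖u‖ * (ℓ * (t * ‖w‖)) :=
      mul_le_mul_of_nonneg_left haX (norm_nonneg u)
    nlinarith [neg_abs_le (⟪u, a - x⟫ : ℝ)]
  have hnq : ‖((a, y2) : Eucl n × Eucl m) - (x, y)‖ ≤ t * (‖w‖ * max ℓ 1) := by
    rw [← dist_eq_norm]; exact hdq
  have hfinal : ⟪u, a - x⟫ + t * ‖w‖ ^ 2 ≤ ε' * (t * (‖w‖ * max ℓ 1)) := by
    have h3 : ε' * ‖((a, y2) : Eucl n × Eucl m) - (x, y)‖ ≤ ε' * (t * (‖w‖ * max ℓ 1)) :=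
      mul_le_mul_of_nonneg_left hnq hε'.le
    calc ⟪u, a - x⟫ + t * ‖w‖ ^ 2 = ⟪u, a - x⟫ + ⟪w, y2 - y⟫ := by rw [hterm2]
      _ ≤ ε' * ‖((a, y2) : Eucl n × Eucl m) - (x, y)‖ := hineq
      _ ≤ _ := h3
  have hεM : ε' * max ℓ 1 = ε := by rw [hε'def, div_mul_cancel₀ ε hM.ne']
  -- t‖w‖² ≤ ℓ t ‖w‖ ‖u‖ + ε t ‖w‖
  have hmain : t * ‖w‖ ^ 2 ≤ ℓ * ‖u‖ * (t * ‖w‖) + ε * (t * ‖w‖) := by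
    have : ε' * (t * (‖w‖ * max ℓ 1)) = ε * (t * ‖w‖) := by
      rw [← hεM]; ring
    nlinarith [hterm1, hfinal]
  nlinarith [mul_pos ht hwn]

/-- the inverse Lipschitz-like property at infinity implies
coderivative nonsingularity at infinity. -/
theorem stmt13 {n m : ℕ} (S : Eucl n → Set (Eucl m)) (hS : IsClosed (svGraph S))
    (ybar : Eucl m) (hJ : ybar ∈ jelonek S)
    (hlip : ∃ R > (0:ℝ), ∃ ℓ > (0:ℝ), ∃ V ∈ 𝓝 ybar,
      ∀ y ∈ V, ∀ y' ∈ V, ∀ x ∈ svInv S y', R < ‖x‖ →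
        x ∈ svInv S y + closedBall (0 : Eucl n) (ℓ * ‖y' - y‖)) :
    {v : Eucl m | (0 : Eucl n) ∈ coderivAtInfty S ybar v} = {0} := by
  ext v
  simp only [Set.mem_setOf_eq, Set.mem_singleton_iff]
  obtain ⟨R, hR, ℓ, hℓ, V, hV, hlipV⟩ := hlip
  obtain ⟨r, hr, hrsub⟩ := Metric.mem_nhds_iff.mp hV
  constructor
  · rintro ⟨pk, ξk, hmem, hinf, hy, hfk, hlim⟩
    -- eventually: ‖xk‖ > R and yk close to ybar
    have hR' : ∀ᶠ k in atTop, R < ‖(pk k).1‖ := hinf.eventually_gt_atTop R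
    have hy' : ∀ᶠ k in atTop, dist ((pk k).2) ybar < r / 2 :=
      hy.eventually (Metric.ball_mem_nhds ybar (by linarith))
    have hbound : ∀ᶠ k in atTop, ‖(ξk k).2‖ ≤ ℓ * ‖(ξk k).1‖ := by
      filter_upwards [hR', hy'] with k hk1 hk2
      have hykV : (pk k).2 ∈ V := hrsub (by
        rw [Metric.mem_ball]; exact lt_trans hk2 (by linarith))
      have hsub2 : ball ((pk k).2) (r / 2) ⊆ V := by
        intro z hz
        apply hrsub
        rw [Metric.mem_ball] at hz ⊢
        calc dist z ybar ≤ dist z ((pk k).2) + dist ((pk k).2) ybar := dist_triangle _ _ _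
          _ < r / 2 + r / 2 := by linarith
          _ = r := by ring
      have hfk' := hfk k
      have : ((ξk k).1, (ξk k).2) ∈ frechetNormalCone2 (svGraph S) ((pk k).1, (pk k).2) := by
        simpa using hfk'
      exact key_bound S R ℓ hℓ V hlipV ((pk k).1) ((pk k).2) hk1 hykV (r / 2)
        (by linarith) hsub2 ((ξk k).1) ((ξk k).2) this
    have h1 : Tendsto (fun k => (ξk k).1) atTop (𝓝 (0 : Eucl n)) :=
      (continuous_fst.tendsto _).comp hlim
    have h2 : Tendsto (fun k => (ξk k).2) atTop (𝓝 (-v)) :=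
      (continuous_snd.tendsto _).comp hlim
    have hlim1 : Tendsto (fun k => ‖(ξk k).1‖) atTop (𝓝 (0:ℝ)) := by
      simpa using h1.norm
    have hlim2 : Tendsto (fun k => ‖(ξk k).2‖) atTop (𝓝 ‖-v‖) := h2.norm
    have hle : ‖-v‖ ≤ ℓ * 0 :=
      le_of_tendsto_of_tendsto hlim2 (hlim1.const_mul ℓ) hbound
    rw [norm_neg, mul_zero] at hle
    exact norm_le_zero_iff.mp hle
  · rintro rfl
    obtain ⟨xk, yk, hxk, hyk, hylim⟩ := hJ
    refine ⟨fun k => (xk k, yk k), fun _ => (0, 0), fun k => hyk k, hxk, hylim,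
      fun k => ⟨hyk k, fun ε hε => ?_⟩, by simpa using tendsto_const_nhds⟩
    filter_upwards with q
    simp only [inner_zero_left, add_zero]
    positivity
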